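/- Let T be a finite type with cardinality q ≥ 1, let m ≥ 1, and let f : Fin m → T → ZMod 4. Suppose that for every nonzero ω : Fin m → ZMod 4, |∑_{x ∈ T} i^{∑_{k} ω_k · f_k(x)}| ≤ √q (where the inner sum is taken in ZMod 4). Then for every ν : Fin m → ZMod 4, the number 𝐍(ν) of elements x ∈ T satisfying f_k(x) = ν_k for all k satisfies |𝐍(ν) − q/4^m| ≤ ((4^m − 1)/4^m) · √q (an inequality of real numbers). -/

import Mathlib

lemma I_pow_mod (n : ℕ) : Complex.I ^ n = Complex.I ^ (n % 4) := by
  conv_lhs => rw [← Nat.div_add_mod n 4]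
  rw [pow_add, pow_mul, Complex.I_pow_four, one_pow, one_mul]

lemma zmod4_sum (g : ZMod 4 → ℂ) : ∑ ω : ZMod 4, g ω = g 0 + g 1 + g 2 + g 3 := by
  show ∑ ω : Fin 4, g ω = _
  exact Fin.sum_univ_four g

lemma zmod4_cases (a : ZMod 4) : a = 0 ∨ a = 1 ∨ a = 2 ∨ a = 3 := by
  revert a; decide

lemma orth (a : ZMod 4) :
    ∑ ω : ZMod 4, Complex.I ^ (ω * a).val = if a = 0 then (4 : ℂ) else 0 := by
  rw [zmod4_sum]
  rcases zmod4_cases a with h | h | h | h <;> subst h <;>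
    norm_num [show ((0:ZMod 4)).val = 0 by decide, show ((1:ZMod 4)).val = 1 by decide,
      show ((2:ZMod 4)).val = 2 by decide, show ((3:ZMod 4)).val = 3 by decide,
      show ((4:ZMod 4)).val = 0 by decide, show ((6:ZMod 4)).val = 2 by decide,
      show ((9:ZMod 4)).val = 1 by decide, pow_succ, Complex.I_sq,
      (show (1:ZMod 4) ≠ 0 by decide), (show (2:ZMod 4) ≠ 0 by decide),
      (show (3:ZMod 4) ≠ 0 by decide)]

lemma chi_add (a b : ZMod 4) :
    Complex.I ^ (a + b).val = Complex.I ^ a.val * Complex.I ^ b.val := by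
  rw [ZMod.val_add, ← I_pow_mod, pow_add]

lemma chi_sum {ι : Type*} (s : Finset ι) (g : ι → ZMod 4) :
    Complex.I ^ (∑ k ∈ s, g k).val = ∏ k ∈ s, Complex.I ^ (g k).val := by
  induction s using Finset.cons_induction with
  | empty => simp
  | cons a s ha ih => rw [Finset.sum_cons, Finset.prod_cons, chi_add, ih]

lemma orth_pi (m : ℕ) (a : Fin m → ZMod 4) :
    ∑ ω : Fin m → ZMod 4, Complex.I ^ (∑ k, ω k * a k).val
      = if a = 0 then (4:ℂ) ^ m else 0 := by
  simp_rw [fun ω : Fin m → ZMod 4 => chi_sum Finset.univ (fun k => ω k * a k)]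
  rw [← Fintype.piFinset_univ, Finset.sum_prod_piFinset Finset.univ fun k c => Complex.I ^ (c * a k).val]
  simp_rw [orth]
  by_cases h : a = 0
  · simp [h]
  · obtain ⟨k, hk⟩ : ∃ k, a k ≠ 0 := by
      by_contra hc; push_neg at hc; exact h (funext hc)
    exact if_neg h ▸ Finset.prod_eq_zero (Finset.mem_univ k) (by simp [hk])


/-- Approximate balance.  If all nontrivial `ZMod 4`-linear combinations of
the quaternary functions `f_k : T → ZMod 4` have character sums of magnitude at most `√q`,
then for every `ν : Fin m → ZMod 4` the number of `x` with `f_k x = ν_k` for all `k`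
deviates from `q / 4^m` by at most `((4^m - 1)/4^m)·√q`. -/
theorem approximate_balance (T : Type) [Fintype T] (q m : ℕ)
    (hq : Fintype.card T = q) (hq1 : 1 ≤ q) (hm : 1 ≤ m)
    (f : Fin m → T → ZMod 4)
    (hchar : ∀ ω : Fin m → ZMod 4, ω ≠ 0 →
      ‖∑ x : T, Complex.I ^ (∑ k : Fin m, ω k * f k x).val‖ ≤ Real.sqrt q)
    (ν : Fin m → ZMod 4) :
    |((Finset.univ.filter fun x : T => ∀ k, f k x = ν k).card : ℝ) - q / 4 ^ m| ≤
      ((4 ^ m - 1) / 4 ^ m) * Real.sqrt q := by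
  classical
  set N : ℕ := (Finset.univ.filter fun x : T => ∀ k, f k x = ν k).card with hN
  set S : (Fin m → ZMod 4) → ℂ :=
    fun ω => ∑ x : T, Complex.I ^ (∑ k, ω k * (f k x - ν k)).val with hS
  -- step 1: column sums give 4^m * N
  have h1 : ∑ x : T, ∑ ω : Fin m → ZMod 4, Complex.I ^ (∑ k, ω k * (f k x - ν k)).val
      = (4:ℂ)^m * N := by
    have key : ∀ x : T,
        (∑ ω : Fin m → ZMod 4, Complex.I ^ (∑ k, ω k * (f k x - ν k)).val)
          = if ∀ k, f k x = ν k then (4:ℂ)^m else 0 := by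
      intro x
      rw [orth_pi]
      congr 1
      simp [funext_iff, sub_eq_zero]
    simp_rw [key]
    rw [← Finset.sum_filter, Finset.sum_const, nsmul_eq_mul, mul_comm]
  have h2 : ∑ ω : Fin m → ZMod 4, S ω = (4:ℂ)^m * N := by
    rw [← h1, Finset.sum_comm]
  -- step 2: zero term
  have h0 : S 0 = (q : ℂ) := by
    simp [hS, ← hq]
  -- split
  have hsplit : (4:ℂ)^m * N - q = ∑ ω ∈ Finset.univ.erase 0, S ω := by
    rw [← h2, ← Finset.add_sum_erase _ S (Finset.mem_univ 0), h0]
    ring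
  -- per-term bound
  have hterm : ∀ ω : Fin m → ZMod 4, ω ≠ 0 → ‖S ω‖ ≤ Real.sqrt q := by
    intro ω hω
    have hdec : ∀ x : T, (∑ k, ω k * (f k x - ν k))
        = (∑ k, ω k * f k x) + (- ∑ k, ω k * ν k) := by
      intro x
      rw [← sub_eq_add_neg, ← Finset.sum_sub_distrib]
      exact Finset.sum_congr rfl fun k _ => by ring
    have : S ω = (∑ x : T, Complex.I ^ (∑ k, ω k * f k x).val)
        * Complex.I ^ (- ∑ k, ω k * ν k).val := by
      rw [hS]
      simp_rw [hdec, chi_add]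
      rw [← Finset.sum_mul]
    rw [this, norm_mul]
    have habs1 : ‖Complex.I ^ (- ∑ k, ω k * ν k).val‖ = 1 := by
      rw [norm_pow, Complex.norm_I, one_pow]
    rw [habs1, mul_one]
    exact hchar ω hω
  -- sum bound
  have hcard : (Finset.univ.erase (0 : Fin m → ZMod 4)).card = 4 ^ m - 1 := by
    rw [Finset.card_erase_of_mem (Finset.mem_univ 0), Finset.card_univ]
    simp [Fintype.card_fun]
  have hbound : ‖(4:ℂ)^m * N - q‖ ≤ ((4:ℝ)^m - 1) * Real.sqrt q := by
    rw [hsplit]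
    calc ‖∑ ω ∈ Finset.univ.erase (0 : Fin m → ZMod 4), S ω‖
        ≤ ∑ ω ∈ Finset.univ.erase (0 : Fin m → ZMod 4), ‖S ω‖ := by
          exact norm_sum_le _ _
      _ ≤ ∑ _ω ∈ Finset.univ.erase (0 : Fin m → ZMod 4), Real.sqrt q := by
          refine Finset.sum_le_sum fun ω hω => hterm ω ?_
          exact (Finset.mem_erase.mp hω).1
      _ = ((4:ℝ)^m - 1) * Real.sqrt q := by
          rw [Finset.sum_const, hcard, nsmul_eq_mul]
          congr 1
          have : (1:ℕ) ≤ 4 ^ m := Nat.one_le_pow _ _ (by norm_num)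
          push_cast [this]
          ring
  -- to real
  have hreal : |(N : ℝ) * 4 ^ m - q| ≤ ((4:ℝ)^m - 1) * Real.sqrt q := by
    have : ((4:ℂ)^m * N - q) = (((N : ℝ) * 4 ^ m - q : ℝ) : ℂ) := by
      push_cast; ring
    rw [this, Complex.norm_real, Real.norm_eq_abs] at hbound
    exact hbound
  have hp : (0:ℝ) < 4 ^ m := by positivity
  rw [div_mul_eq_mul_div, le_div_iff₀ hp]
  calc |(N:ℝ) - q / 4 ^ m| * 4 ^ m = |(N:ℝ) - q / 4 ^ m| * |(4:ℝ)^m| := by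
        rw [abs_of_pos hp]
    _ = |((N:ℝ) - q / 4 ^ m) * 4 ^ m| := (abs_mul _ _).symm
    _ = |(N : ℝ) * 4 ^ m - q| := by
        congr 1
        field_simp
    _ ≤ ((4:ℝ)^m - 1) * Real.sqrt q := hreal
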